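/- If n and m are both even with 3 ≤ n ≤ m−2, then there exists a red/blue coloring of the edges of K_{n+m−2} containing no red K_{1,n} and no blue K_{1,m}+e. -/

import Mathlib

open SimpleGraph

/-- `Contains G H` : the graph `G` contains a copy of `H`. -/
def Contains {V W : Type*} (G : SimpleGraph V) (H : SimpleGraph W) : Prop :=
  ∃ f : W → V, Function.Injective f ∧ ∀ a b, H.Adj a b → G.Adj (f a) (f b)

/-- The star `K_{1,n}` on `n+1` vertices: vertex `0` is joined to all others. -/
def starG (n : ℕ) : SimpleGraph (Fin (n + 1)) :=
  SimpleGraph.fromRel (fun a _ => a = 0)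

/-- `K_{1,m}+e` on `m+1` vertices: vertex `0` joined to all others, plus the edge `{1,2}`. -/
def starPlusE (m : ℕ) : SimpleGraph (Fin (m + 1)) :=
  SimpleGraph.fromRel (fun a b => a = 0 ∨ (a = 1 ∧ b = 2))

/-- circular difference -/
def dd (N : ℕ) (a b : Fin N) : ℕ :=
  if b.val ≤ a.val then a.val - b.val else a.val + N - b.val

/-- set of allowed differences -/
def TT (N k : ℕ) : Finset ℕ := Finset.Icc 1 k ∪ Finset.Icc (N - k) (N - 1)

lemma dd_inj (N : ℕ) (a b₁ b₂ : Fin N) (h : dd N a b₁ = dd N a b₂) : b₁ = b₂ := by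
  have h1 := a.isLt
  have h2 := b₁.isLt
  have h3 := b₂.isLt
  apply Fin.ext
  simp only [dd] at h
  split_ifs at h <;> omega

lemma dd_bounds (N : ℕ) (a b : Fin N) (h : a ≠ b) :
    1 ≤ dd N a b ∧ dd N a b ≤ N - 1 := by
  have h1 := a.isLt
  have h2 := b.isLt
  have h3 : a.val ≠ b.val := fun hh => h (Fin.ext hh)
  simp only [dd]
  split_ifs <;> omega

/-- the circulant red graph -/
def RR (N k : ℕ) : SimpleGraph (Fin N) where
  Adj a b := a ≠ b ∧ dd N a b ∈ TT N k
  symm := by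
    refine ⟨?_⟩; rintro a b ⟨hne, hmem⟩
    refine ⟨hne.symm, ?_⟩
    have h1 := a.isLt
    have h2 := b.isLt
    have h3 : a.val ≠ b.val := fun hh => hne (Fin.ext hh)
    simp only [dd, TT, Finset.mem_union, Finset.mem_Icc] at hmem ⊢
    split_ifs at hmem ⊢ <;> omega
  loopless := by refine ⟨?_⟩; rintro a ⟨h, -⟩; exact h rfl

theorem stmt_1 (n m : ℕ) (hne : Even n) (hme : Even m) (hn : 3 ≤ n) (hnm : n + 2 ≤ m) :
    ∃ R : SimpleGraph (Fin (n + m - 2)),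
      ¬ Contains R (starG n) ∧ ¬ Contains Rᶜ (starPlusE m) := by
  classical
  obtain ⟨p, hp⟩ := hne
  set N := n + m - 2 with hNdef
  set k := p - 1 with hkdef
  have hk : 2 * k + 2 = n := by omega
  have hN : N + 2 = n + m := by omega
  have hTsub : TT N k ⊆ Finset.Icc 1 (N - 1) := by
    intro x hx
    simp only [TT, Finset.mem_union, Finset.mem_Icc] at hx ⊢
    omega
  have hTcard : (TT N k).card = 2 * k := by
    have hdisj : Disjoint (Finset.Icc 1 k) (Finset.Icc (N - k) (N - 1)) := by
      rw [Finset.disjoint_left]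
      intro x hx hy
      simp only [Finset.mem_Icc] at hx hy
      omega
    rw [TT, Finset.card_union_of_disjoint hdisj, Nat.card_Icc, Nat.card_Icc]
    omega
  refine ⟨RR N k, ?_, ?_⟩
  · rintro ⟨f, finj, hf⟩
    have hsub : (Finset.univ.erase (0 : Fin (n + 1))).image f ⊆
        Finset.univ.filter (fun b => (RR N k).Adj (f 0) b) := by
      intro b hb
      simp only [Finset.mem_image, Finset.mem_erase, Finset.mem_univ, true_and,
        and_true] at hb
      obtain ⟨i, hi, rfl⟩ := hb
      refine Finset.mem_filter.2 ⟨Finset.mem_univ _, hf 0 i ?_⟩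
      simp only [starG, fromRel_adj]
      exact ⟨Ne.symm hi, by tauto⟩
    have hlow : n ≤ (Finset.univ.filter (fun b => (RR N k).Adj (f 0) b)).card := by
      have := Finset.card_le_card hsub
      rwa [Finset.card_image_of_injective _ finj,
        Finset.card_erase_of_mem (Finset.mem_univ _), Finset.card_univ,
        Fintype.card_fin, Nat.add_sub_cancel] at this
    have hhigh : (Finset.univ.filter (fun b => (RR N k).Adj (f 0) b)).card
        ≤ (TT N k).card := by
      apply Finset.card_le_card_of_injOn (fun b => dd N (f 0) b)
      · intro b hb
        exact ((Finset.mem_filter.1 hb).2).2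
      · intro b₁ _ b₂ _ h
        exact dd_inj N (f 0) b₁ b₂ h
    omega
  · rintro ⟨f, finj, hf⟩
    have hsub : (Finset.univ.erase (0 : Fin (m + 1))).image f ⊆
        Finset.univ.filter (fun b => (RR N k)ᶜ.Adj (f 0) b) := by
      intro b hb
      simp only [Finset.mem_image, Finset.mem_erase, Finset.mem_univ, true_and,
        and_true] at hb
      obtain ⟨i, hi, rfl⟩ := hb
      refine Finset.mem_filter.2 ⟨Finset.mem_univ _, hf 0 i ?_⟩
      simp only [starPlusE, fromRel_adj]
      exact ⟨Ne.symm hi, by tauto⟩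
    have hlow : m ≤ (Finset.univ.filter (fun b => (RR N k)ᶜ.Adj (f 0) b)).card := by
      have := Finset.card_le_card hsub
      rwa [Finset.card_image_of_injective _ finj,
        Finset.card_erase_of_mem (Finset.mem_univ _), Finset.card_univ,
        Fintype.card_fin, Nat.add_sub_cancel] at this
    have hhigh : (Finset.univ.filter (fun b => (RR N k)ᶜ.Adj (f 0) b)).card
        ≤ (Finset.Icc 1 (N - 1) \ TT N k).card := by
      apply Finset.card_le_card_of_injOn (fun b => dd N (f 0) b)
      · intro b hb
        obtain ⟨hne', hnadj⟩ := (compl_adj _ _ _).1 (Finset.mem_filter.1 hb).2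
        have hb1 := dd_bounds N (f 0) b hne'
        refine Finset.mem_sdiff.2 ⟨Finset.mem_Icc.2 ⟨hb1.1, hb1.2⟩, ?_⟩
        intro hmem
        exact hnadj ⟨hne', hmem⟩
      · intro b₁ _ b₂ _ h
        exact dd_inj N (f 0) b₁ b₂ h
    have hsd : (Finset.Icc 1 (N - 1) \ TT N k).card
        = (Finset.Icc 1 (N - 1)).card - (TT N k).card :=
      Finset.card_sdiff_of_subset hTsub
    rw [hsd, Nat.card_Icc, hTcard] at hhigh
    omega
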